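/- Let n ≥ 1 and let a, b, c ∈ ℤ_n, and let P(x,y) = a + b·x + c·y. Then (ℤ_n, P) is a quasigroup satisfying the Abel–Grassmann law P(x, P(y,z)) = P(z, P(y,x)) for all x, y, z ∈ ℤ_n if and only if c² = b in ℤ_n and both b and c are units of ℤ_n. -/

import Mathlib

/-- For `P(x,y) = a + b*x + c*y` over `ℤ_n` (`n ≥ 1`), `(ℤ_n, P)` is an
Abel–Grassmann quasigroup iff `c² = b` and both `b` and `c` are units. -/
theorem stmt_4 (n : ℕ) (hn : 1 ≤ n) (a b c : ZMod n) :
    ((∀ u : ZMod n, Function.Bijective (fun x : ZMod n => a + b * x + c * u) ∧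
        Function.Bijective (fun y : ZMod n => a + b * u + c * y)) ∧
      (∀ x y z : ZMod n,
        a + b * x + c * (a + b * y + c * z) = a + b * z + c * (a + b * y + c * x))) ↔
    (c ^ 2 = b ∧ IsUnit b ∧ IsUnit c) := by
  haveI : NeZero n := ⟨Nat.one_le_iff_ne_zero.mp hn⟩
  constructor
  · rintro ⟨hq, hag⟩
    have hcb : c ^ 2 = b := by
      have := hag 1 0 0
      ring_nf at this ⊢
      linear_combination -this
    refine ⟨hcb, ?_, ?_⟩
    · obtain ⟨hb, -⟩ := hq 0
      have hinj : Function.Injective (fun x : ZMod n => b * x) := by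
        intro x y hxy
        apply hb.1
        simp only [mul_zero, add_zero]
        simpa using congrArg (fun t => a + t) hxy
      have hsurj : Function.Surjective (fun x : ZMod n => b * x) :=
        Finite.surjective_of_injective hinj
      obtain ⟨x, hx⟩ := hsurj 1
      exact IsUnit.of_mul_eq_one (a := b) x hx
    · obtain ⟨-, hc⟩ := hq 0
      have hinj : Function.Injective (fun y : ZMod n => c * y) := by
        intro x y hxy
        apply hc.1
        simpa using congrArg (fun t => a + b * 0 + t) hxy
      have hsurj : Function.Surjective (fun y : ZMod n => c * y) :=
        Finite.surjective_of_injective hinj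
      obtain ⟨x, hx⟩ := hsurj 1
      exact IsUnit.of_mul_eq_one (a := c) x hx
  · rintro ⟨hcb, hb, hc⟩
    constructor
    · intro u
      constructor
      · have hinj : Function.Injective (fun x : ZMod n => a + b * x + c * u) := by
          intro x y hxy
          simp only at hxy
          have : b * x = b * y := by linear_combination hxy
          exact (hb.mul_right_injective) this
        exact ⟨hinj, Finite.surjective_of_injective hinj⟩
      · have hinj : Function.Injective (fun y : ZMod n => a + b * u + c * y) := by
          intro x y hxy
          simp only at hxy
          have : c * x = c * y := by linear_combination hxy
          exact (hc.mul_right_injective) this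
        exact ⟨hinj, Finite.surjective_of_injective hinj⟩
    · intro x y z
      subst hcb
      ring
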